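/- arXiv:1809.05593 — 2 statements merged into one kernel-verified Lean document; each statement's English description precedes it below -/
import Mathlib

section
/- Let H = {x ∈ ℝ⁴ : x₁ > 0} be the open upper half-space, let u be a smooth real-valued function on H, and let a ≥ 0 be a constant. Assume that on H: (i) Δu(x) = −a·x₁; (ii) x₁·Δu(x) = 2·∂₁u(x); and (iii) −Δu − |∇u|² ≥ 0. Then a = 0 and u is constant on H. (Intermediate step in the paper's Liouville argument: from (i) and (ii), ∂₁u = −a·x₁²/2, hence |∇u|² ≥ a²x₁⁴/4, and the inequality a·x₁ − a²x₁⁴/4 ≥ 0 for all x₁ > 0 forces a = 0; then |∇u|² ≤ −Δu = 0, so u is constant on the connected set H.) -/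
/-- The Euclidean Laplacian on `ℝ⁴`: the sum of the pure second partial derivatives. -/
noncomputable def lap (u : EuclideanSpace ℝ (Fin 4) → ℝ) (x : EuclideanSpace ℝ (Fin 4)) : ℝ :=
  ∑ i : Fin 4,
    iteratedFDeriv ℝ 2 u x ![EuclideanSpace.single i (1 : ℝ), EuclideanSpace.single i (1 : ℝ)]

/-- If `u` is smooth on the open half-space `H = {x₁ > 0} ⊆ ℝ⁴`, `a ≥ 0`, and on `H` we
have `Δu = −a·x₁`, `x₁·Δu = 2∂₁u`, and `−Δu − |∇u|² ≥ 0`, then `a = 0` and `u` is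
constant on `H`. -/
theorem liouville_step (u : EuclideanSpace ℝ (Fin 4) → ℝ) (a : ℝ) (ha : 0 ≤ a)
    (hsmooth : ContDiffOn ℝ (⊤ : ℕ∞) u {x : EuclideanSpace ℝ (Fin 4) | 0 < x 0})
    (h1 : ∀ x : EuclideanSpace ℝ (Fin 4), 0 < x 0 → lap u x = -a * x 0)
    (h2 : ∀ x : EuclideanSpace ℝ (Fin 4), 0 < x 0 →
      x 0 * lap u x = 2 * fderiv ℝ u x (EuclideanSpace.single 0 (1 : ℝ)))
    (h3 : ∀ x : EuclideanSpace ℝ (Fin 4), 0 < x 0 →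
      0 ≤ - lap u x - ‖gradient u x‖ ^ 2) :
    a = 0 ∧ ∃ c : ℝ, ∀ x : EuclideanSpace ℝ (Fin 4), 0 < x 0 → u x = c := by
  -- fderiv applied to a unit vector is bounded by the gradient norm
  have hfd : ∀ x : EuclideanSpace ℝ (Fin 4),
      |fderiv ℝ u x (EuclideanSpace.single 0 (1 : ℝ))| ≤ ‖gradient u x‖ := by
    intro x
    have : fderiv ℝ u x (EuclideanSpace.single 0 (1 : ℝ))
        = inner ℝ (gradient u x) (EuclideanSpace.single 0 (1 : ℝ)) := by
      rw [gradient]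
      simp [real_inner_comm]
    rw [this]
    calc |inner ℝ (gradient u x) (EuclideanSpace.single (0 : Fin 4) (1 : ℝ))|
        ≤ ‖gradient u x‖ * ‖EuclideanSpace.single (0 : Fin 4) (1 : ℝ)‖ :=
          abs_real_inner_le_norm _ _
      _ = ‖gradient u x‖ := by simp [EuclideanSpace.norm_single]
  -- key inequality: a t ≥ a² t⁴ / 4 for all t > 0
  have key : ∀ t : ℝ, 0 < t → a ^ 2 * t ^ 4 / 4 ≤ a * t := by
    intro t ht
    set x : EuclideanSpace ℝ (Fin 4) := EuclideanSpace.single 0 t with hxdef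
    have hx0 : x 0 = t := by simp [hxdef, EuclideanSpace.single_apply]
    have hx : 0 < x 0 := by rw [hx0]; exact ht
    have hlap := h1 x hx
    have hpd := h2 x hx
    have hineq := h3 x hx
    have hd : fderiv ℝ u x (EuclideanSpace.single 0 (1 : ℝ)) = -a * t ^ 2 / 2 := by
      rw [hlap, hx0] at hpd; linarith [hpd]
    have hbound := hfd x
    rw [hd] at hbound
    have h2' : (-a * t ^ 2 / 2) ^ 2 ≤ ‖gradient u x‖ ^ 2 := by
      have := abs_nonneg (-a * t ^ 2 / 2)
      nlinarith [abs_nonneg (-a * t ^ 2 / 2), sq_abs (-a * t ^ 2 / 2), norm_nonneg (gradient u x)]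
    rw [hlap, hx0] at hineq
    nlinarith
  have ha0 : a = 0 := by
    by_contra h
    have hapos : 0 < a := lt_of_le_of_ne ha (Ne.symm h)
    set b : ℝ := 4 / a with hbdef
    have hbpos : 0 < b := by positivity
    have hb : a * b = 4 := by rw [hbdef]; field_simp
    have ht : (0:ℝ) < b + 1 := by linarith
    have hkey := key (b + 1) ht
    have h5 : a * (b + 1) * (a * (b + 1) ^ 3 - 4) ≤ 0 := by nlinarith [hkey]
    have h6 : a * (b + 1) ^ 3 ≤ 4 := by nlinarith [h5, mul_pos hapos ht]
    nlinarith [hb, sq_nonneg b, hbpos, hapos]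
  refine ⟨ha0, ?_⟩
  -- now the gradient vanishes on H
  set s : Set (EuclideanSpace ℝ (Fin 4)) := {x | 0 < x 0} with hs
  have hs_open : IsOpen s :=
    isOpen_lt continuous_const (EuclideanSpace.proj (0 : Fin 4)).continuous
  have hs_conv : Convex ℝ s := by
    apply convex_halfSpace_gt (f := fun x : EuclideanSpace ℝ (Fin 4) => x 0)
    exact ⟨fun x y => rfl, fun c x => rfl⟩
  have hgrad0 : ∀ x ∈ s, fderiv ℝ u x = 0 := by
    intro x hx
    have hineq := h3 x hx
    have hlap := h1 x hx
    rw [ha0] at hlap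
    simp at hlap
    rw [hlap] at hineq
    have : ‖gradient u x‖ = 0 := by
      have := sq_nonneg ‖gradient u x‖
      nlinarith [norm_nonneg (gradient u x)]
    have hg : gradient u x = 0 := norm_eq_zero.mp this
    have : fderiv ℝ u x = (InnerProductSpace.toDual ℝ _) (gradient u x) := by
      rw [gradient]; simp
    rw [this, hg, map_zero]
  have hdiff : ∀ x ∈ s, DifferentiableAt ℝ u x := by
    intro x hx
    exact (hsmooth.differentiableOn (by simp)).differentiableAt (hs_open.mem_nhds hx)
  have hnorm : ∀ x ∈ s, ‖fderiv ℝ u x‖ ≤ 0 := by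
    intro x hx; rw [hgrad0 x hx]; simp
  have hy : (EuclideanSpace.single (0 : Fin 4) (1 : ℝ)) ∈ s := by
    simp [hs, EuclideanSpace.single_apply]
  refine ⟨u (EuclideanSpace.single (0 : Fin 4) (1 : ℝ)), fun x hx => ?_⟩
  have := hs_conv.norm_image_sub_le_of_norm_fderiv_le hdiff hnorm hy hx
  simp at this
  have : ‖u x - u (EuclideanSpace.single (0 : Fin 4) (1 : ℝ))‖ ≤ 0 := by
    calc ‖u x - u (EuclideanSpace.single (0 : Fin 4) (1 : ℝ))‖
        ≤ 0 * ‖x - EuclideanSpace.single (0 : Fin 4) (1 : ℝ)‖ :=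
          hs_conv.norm_image_sub_le_of_norm_fderiv_le hdiff hnorm hy hx
      _ = 0 := by ring
  have := norm_le_zero_iff.mp this
  linarith [sub_eq_zero.mp this ▸ (rfl : u x = u x)]
end

section
/- Let (X, d) be a metric space, μ a Borel measure on X, x ∈ X, and let C > 0 and v > 0 be constants. Assume: (i) μ(B(x,1)) ≥ v; and (ii) for every s > 0, (s/2)²·μ(B(x, s/2))^{1/2} ≤ C·μ(B(x, s)). Then there exists a constant c > 0, depending only on C and v, such that μ(B(x, s)) ≥ c·s⁴ for all s ≥ 1. (This is the iteration lemma proved inline in Step 4 of the paper's diameter bound: the Euclidean-type Sobolev inequality applied to the test functions U(y) = max(s − d(y,x), 0) yields exactly hypothesis (ii), and iterating it doubling the radius from scale 1 gives Euclidean volume growth of balls.) -/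
open MeasureTheory Metric

/-- **Volume-growth iteration lemma (Step 4 of the diameter bound).**
Given constants `C > 0` and `v > 0`, there is `c > 0` (depending only on `C` and `v`)
such that for every metric space `X` with a Borel measure `μ` and every `x ∈ X` with
`μ(B(x,1)) ≥ v` and `(s/2)²·μ(B(x,s/2))^{1/2} ≤ C·μ(B(x,s))` for all `s > 0`, one has
`μ(B(x,s)) ≥ c·s⁴` for all `s ≥ 1`. -/
theorem volume_growth_iteration (C v : ℝ) (hC : 0 < C) (hv : 0 < v) :
    ∃ c : ℝ, 0 < c ∧
      ∀ (X : Type) [MetricSpace X] [MeasurableSpace X] [BorelSpace X]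
        (μ : Measure X) (x : X),
        ENNReal.ofReal v ≤ μ (ball x 1) →
        (∀ s : ℝ, 0 < s →
          ENNReal.ofReal ((s / 2) ^ 2) * (μ (ball x (s / 2))) ^ (1 / 2 : ℝ) ≤
            ENNReal.ofReal C * μ (ball x s)) →
        ∀ s : ℝ, 1 ≤ s → ENNReal.ofReal (c * s ^ 4) ≤ μ (ball x s) := by
  set m : ℝ := min v (1 / (256 * C ^ 2)) with hm
  have hm0 : 0 < m := lt_min hv (by positivity)
  have hmC : m ≤ 1 / (256 * C ^ 2) := min_le_right _ _
  have hsqrtm : Real.sqrt m ≤ 1 / (16 * C) := by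
    have h1 : Real.sqrt m ≤ Real.sqrt (1 / (256 * C ^ 2)) := Real.sqrt_le_sqrt hmC
    rwa [show (1 / (256 * C ^ 2) : ℝ) = (1 / (16 * C)) ^ 2 by field_simp; ring,
      Real.sqrt_sq (by positivity)] at h1
  have hkey : 16 * C * m ≤ Real.sqrt m := by
    have h1 : Real.sqrt m * (16 * C) ≤ 1 := (le_div_iff₀ (by positivity)).mp hsqrtm
    nlinarith [Real.sq_sqrt hm0.le, Real.sqrt_nonneg m]
  refine ⟨m / 16, by positivity, ?_⟩
  intro X _ _ _ μ x hv1 hdoub s hs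
  have key : ∀ n : ℕ, ENNReal.ofReal (m * ((2:ℝ) ^ n) ^ 4) ≤ μ (ball x ((2:ℝ) ^ n)) := by
    intro n
    induction n with
    | zero =>
      simpa using (le_trans (ENNReal.ofReal_le_ofReal (min_le_left v _)) hv1 : ENNReal.ofReal m ≤ μ (ball x 1))
    | succ n ih =>
      have hpos : (0:ℝ) < 2 ^ (n+1) := by positivity
      have h2 := hdoub ((2:ℝ) ^ (n+1)) hpos
      have hhalf : (2:ℝ) ^ (n+1) / 2 = 2 ^ n := by
        rw [pow_succ]; ring
      rw [hhalf] at h2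
      have hb : (0:ℝ) < m * ((2:ℝ) ^ n) ^ 4 := by positivity
      have hsq : ENNReal.ofReal ((m * ((2:ℝ)^n)^4) ^ ((1:ℝ)/2)) ≤
          (μ (ball x ((2:ℝ)^n))) ^ (1/2 : ℝ) := by
        rw [← ENNReal.ofReal_rpow_of_pos hb]
        exact ENNReal.rpow_le_rpow ih (by norm_num)
      have hA : ENNReal.ofReal (((2:ℝ)^n)^2 * (m * ((2:ℝ)^n)^4) ^ ((1:ℝ)/2)) ≤
          ENNReal.ofReal C * μ (ball x ((2:ℝ)^(n+1))) := by
        rw [ENNReal.ofReal_mul (by positivity)]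
        exact le_trans (mul_le_mul_right hsq _) h2
      have hval : ((2:ℝ)^n)^2 * (m * ((2:ℝ)^n)^4) ^ ((1:ℝ)/2)
          = Real.sqrt m * ((2:ℝ)^n)^4 := by
        rw [← Real.sqrt_eq_rpow, Real.sqrt_mul hm0.le,
          show (((2:ℝ)^n)^4 : ℝ) = (((2:ℝ)^n)^2)^2 by ring,
          Real.sqrt_sq (by positivity)]
        ring
      rw [hval] at hA
      have hreal : C * (m * ((2:ℝ)^(n+1))^4) ≤ Real.sqrt m * ((2:ℝ)^n)^4 := by
        have h16 : ((2:ℝ)^(n+1))^4 = 16 * ((2:ℝ)^n)^4 := by rw [pow_succ]; ring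
        rw [h16]
        have hp : (0:ℝ) ≤ ((2:ℝ)^n)^4 := by positivity
        nlinarith [mul_le_mul_of_nonneg_right hkey hp]
      have hfin : ENNReal.ofReal C * ENNReal.ofReal (m * ((2:ℝ)^(n+1))^4) ≤
          ENNReal.ofReal C * μ (ball x ((2:ℝ)^(n+1))) := by
        calc ENNReal.ofReal C * ENNReal.ofReal (m * ((2:ℝ)^(n+1))^4)
            = ENNReal.ofReal (C * (m * ((2:ℝ)^(n+1))^4)) := by
              rw [ENNReal.ofReal_mul hC.le]
          _ ≤ ENNReal.ofReal (Real.sqrt m * ((2:ℝ)^n)^4) :=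
              ENNReal.ofReal_le_ofReal hreal
          _ ≤ ENNReal.ofReal C * μ (ball x ((2:ℝ)^(n+1))) := hA
      exact (ENNReal.mul_le_mul_iff_right ((ENNReal.ofReal_pos.mpr hC).ne') ENNReal.ofReal_ne_top).mp hfin
  -- now interpolate between dyadic scales
  set n := ⌊Real.logb 2 s⌋₊ with hn
  have hs0 : (0:ℝ) < s := by linarith
  have hlog0 : 0 ≤ Real.logb 2 s := Real.logb_nonneg (by norm_num) hs
  have h1 : (2:ℝ) ^ n ≤ s := by
    have := Real.rpow_le_rpow_of_exponent_le (by norm_num : (1:ℝ) ≤ 2)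
      (Nat.floor_le hlog0)
    rwa [Real.rpow_natCast, Real.rpow_logb (by norm_num) (by norm_num) hs0] at this
  have h2 : s ≤ (2:ℝ) ^ (n+1) := by
    have hlt : Real.logb 2 s ≤ ((n:ℝ) + 1) := (Nat.lt_floor_add_one _).le
    have := Real.rpow_le_rpow_of_exponent_le (by norm_num : (1:ℝ) ≤ 2) hlt
    rw [Real.rpow_logb (by norm_num) (by norm_num) hs0] at this
    rw [show ((n:ℝ) + 1) = ((n+1 : ℕ) : ℝ) by push_cast; ring, Real.rpow_natCast] at this
    exact this
  calc ENNReal.ofReal (m / 16 * s ^ 4) ≤ ENNReal.ofReal (m * ((2:ℝ)^n)^4) := by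
        apply ENNReal.ofReal_le_ofReal
        have hs4 : s ^ 4 ≤ ((2:ℝ)^(n+1)) ^ 4 := pow_le_pow_left₀ hs0.le h2 4
        have h16 : ((2:ℝ)^(n+1))^4 = 16 * ((2:ℝ)^n)^4 := by rw [pow_succ]; ring
        nlinarith [hm0.le]
    _ ≤ μ (ball x ((2:ℝ)^n)) := key n
    _ ≤ μ (ball x s) := measure_mono (ball_subset_ball h1)
end
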